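/- arXiv:2312.13195 — 2 statements merged into one kernel-verified Lean document; each statement's English description precedes it below -/
import Mathlib

section
/- Let P₁ and P₂ be independent real random variables, where P₁ has a hyperbolic density f₁ with parameters α, β, χ, μ (with α > |β|, χ > 0) and P₂ is normally distributed with mean 0 and variance σ² (σ > 0). Define Y₁ = (P₁+P₂)/√2 and Y₂ = (P₁−P₂)/√2. Then the limit as y → +∞ of ℙ(Y₁ ≥ y and Y₂ ≥ y) / ℙ(Y₂ ≥ y) exists and equals 2·Φ(−(α−β)·σ), where Φ is the standard normal cumulative distribution function (the coefficient of upper tail dependence of the copula of (Y₁,Y₂)). -/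
open MeasureTheory ProbabilityTheory Filter Real

/-- The standard normal cumulative distribution function `Φ`. -/
noncomputable def stdNormalCDF (x : ℝ) : ℝ :=
  (ProbabilityTheory.gaussianReal 0 1 (Set.Iic x)).toReal


section AuxLemmas

open Set

namespace TailAux


lemma le_sqrt_aux {χ : ℝ} (hχ : 0 ≤ χ) (v : ℝ) : v ≤ Real.sqrt (χ + v ^ 2) := by
  calc v ≤ |v| := le_abs_self v
  _ = Real.sqrt (v ^ 2) := (Real.sqrt_sq_eq_abs v).symm
  _ ≤ Real.sqrt (χ + v ^ 2) := Real.sqrt_le_sqrt (by linarith)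

lemma tendsto_sqrt_sub {χ : ℝ} (hχ : 0 < χ) :
    Tendsto (fun v : ℝ => v - Real.sqrt (χ + v ^ 2)) atTop (nhds 0) := by
  have hden : Tendsto (fun v : ℝ => Real.sqrt (χ + v ^ 2) + v) atTop atTop :=
    Tendsto.nonneg_add_atTop (fun v => Real.sqrt_nonneg _) tendsto_id
  have h0 : Tendsto (fun v : ℝ => -(χ / (Real.sqrt (χ + v ^ 2) + v))) atTop (nhds 0) := by
    have := (tendsto_const_nhds (x := χ)).div_atTop hden
    simpa using this.neg
  refine h0.congr' ?_
  filter_upwards [eventually_ge_atTop (0 : ℝ)] with v hv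
  have hs : 0 < Real.sqrt (χ + v ^ 2) := Real.sqrt_pos.mpr (by positivity)
  have hd : 0 < Real.sqrt (χ + v ^ 2) + v := by linarith
  have hsq : Real.sqrt (χ + v ^ 2) ^ 2 = χ + v ^ 2 := Real.sq_sqrt (by positivity)
  field_simp
  nlinarith [hsq]

lemma bound_integrable {l C μ : ℝ} (hl : 0 < l) :
    IntegrableOn (fun u : ℝ => C * Real.exp (l * μ - l * u)) (Ioi 0) := by
  have h : IntegrableOn (fun u : ℝ => Real.exp (-l * u)) (Ioi 0) :=
    exp_neg_integrableOn_Ioi 0 hl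
  have h2 := (h.const_mul (C * Real.exp (l * μ)))
  have h3 : (fun u : ℝ => C * Real.exp (l * μ - l * u))
      = fun u : ℝ => C * Real.exp (l * μ) * Real.exp (-l * u) := by
    funext u; rw [mul_assoc, ← Real.exp_add]; ring_nf
  rw [h3]; exact h2

lemma bound_integral {l C μ : ℝ} (hl : 0 < l) :
    ∫ u in Ioi (0:ℝ), C * Real.exp (l * μ - l * u) = C * Real.exp (l * μ) / l := by
  have h1 : ∀ u : ℝ, C * Real.exp (l * μ - l * u)
      = (C * Real.exp (l * μ)) * Real.exp (-(l * u)) := by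
    intro u; rw [mul_assoc, ← Real.exp_add]; ring_nf
  simp_rw [h1]
  rw [integral_const_mul]
  have h2 : ∫ u in Ioi (0:ℝ), Real.exp (-(l * u))
      = l⁻¹ • ∫ x in Ioi (l * 0), Real.exp (-x) :=
    integral_comp_mul_left_Ioi (fun x => Real.exp (-x)) 0 hl
  rw [h2, mul_zero, integral_exp_neg_Ioi, neg_zero, Real.exp_zero]
  simp [div_eq_mul_inv]
  try ring

/-- the exponent identity -/
lemma exponent_eq (α β χ μ : ℝ) (t u : ℝ) :
    (-(α * Real.sqrt (χ + (t + u - μ) ^ 2)) + β * (t + u - μ)) + (α - β) * t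
      = (α - β) * μ - (α - β) * u
        + α * ((t + u - μ) - Real.sqrt (χ + (t + u - μ) ^ 2)) := by
  ring

lemma integrand_le {α β χ μ C : ℝ} (hαβ : |β| < α) (hχ : 0 < χ) (hC : 0 < C) (t u : ℝ) :
    Real.exp ((α - β) * t)
        * (C * Real.exp (-(α * Real.sqrt (χ + (t + u - μ) ^ 2)) + β * (t + u - μ)))
      ≤ C * Real.exp ((α - β) * μ - (α - β) * u) := by
  have hα : 0 < α := lt_of_le_of_lt (abs_nonneg β) hαβ
  rw [mul_comm (Real.exp _) _, mul_assoc, ← Real.exp_add, exponent_eq α β χ μ t u]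
  have h1 : (t + u - μ) - Real.sqrt (χ + (t + u - μ) ^ 2) ≤ 0 :=
    sub_nonpos.mpr (le_sqrt_aux hχ.le _)
  have : (α - β) * μ - (α - β) * u + α * ((t + u - μ) - Real.sqrt (χ + (t + u - μ) ^ 2))
      ≤ (α - β) * μ - (α - β) * u := by nlinarith
  exact mul_le_mul_of_nonneg_left (Real.exp_le_exp.mpr this) hC.le

lemma tendsto_integrand {α β χ μ C : ℝ} (hαβ : |β| < α) (hχ : 0 < χ) (hC : 0 < C) (u : ℝ) :
    Tendsto (fun t : ℝ => Real.exp ((α - β) * t)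
        * (C * Real.exp (-(α * Real.sqrt (χ + (t + u - μ) ^ 2)) + β * (t + u - μ))))
      atTop (nhds (C * Real.exp ((α - β) * μ - (α - β) * u))) := by
  have heq : ∀ t : ℝ, Real.exp ((α - β) * t)
        * (C * Real.exp (-(α * Real.sqrt (χ + (t + u - μ) ^ 2)) + β * (t + u - μ)))
      = C * Real.exp ((α - β) * μ - (α - β) * u
          + α * ((t + u - μ) - Real.sqrt (χ + (t + u - μ) ^ 2))) := by
    intro t
    rw [mul_comm (Real.exp _) _, mul_assoc, ← Real.exp_add, exponent_eq α β χ μ t u]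
  simp_rw [heq]
  have h1 : Tendsto (fun t : ℝ => t + u - μ) atTop atTop := by
    apply tendsto_atTop_add_const_right
    exact tendsto_atTop_add_const_right _ _ tendsto_id
  have h2 : Tendsto (fun t : ℝ => (t + u - μ) - Real.sqrt (χ + (t + u - μ) ^ 2))
      atTop (nhds 0) := (tendsto_sqrt_sub hχ).comp h1
  have h3 : Tendsto (fun t : ℝ => (α - β) * μ - (α - β) * u
        + α * ((t + u - μ) - Real.sqrt (χ + (t + u - μ) ^ 2)))
      atTop (nhds ((α - β) * μ - (α - β) * u + α * 0)) :=
    tendsto_const_nhds.add (h2.const_mul α)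
  rw [mul_zero, add_zero] at h3
  exact ((Real.continuous_exp.tendsto _).comp h3).const_mul C

lemma tendsto_main {α β χ μ C : ℝ} (hαβ : |β| < α) (hχ : 0 < χ) (hC : 0 < C) :
    Tendsto (fun t : ℝ => ∫ u in Ioi (0:ℝ), Real.exp ((α - β) * t)
        * (C * Real.exp (-(α * Real.sqrt (χ + (t + u - μ) ^ 2)) + β * (t + u - μ))))
      atTop (nhds (C * Real.exp ((α - β) * μ) / (α - β))) := by
  have hl : 0 < α - β := by
    have := neg_abs_le β; have := le_abs_self β; linarith [abs_nonneg β, hαβ]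
  have key := tendsto_integral_filter_of_dominated_convergence
    (μ := volume.restrict (Ioi (0:ℝ))) (l := atTop) (f := fun u => C * Real.exp ((α - β) * μ - (α - β) * u))
    (F := fun t u => Real.exp ((α - β) * t)
        * (C * Real.exp (-(α * Real.sqrt (χ + (t + u - μ) ^ 2)) + β * (t + u - μ))))
    (bound := fun u => C * Real.exp ((α - β) * μ - (α - β) * u))
    ?_ ?_ (bound_integrable hl) ?_
  · rwa [bound_integral hl] at key
  · refine Eventually.of_forall fun t => ?_
    apply Continuous.aestronglyMeasurable
    fun_prop
  · refine Eventually.of_forall fun t => Eventually.of_forall fun u => ?_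
    rw [Real.norm_eq_abs, abs_of_pos (by positivity)]
    exact integrand_le hαβ hχ hC t u
  · exact Eventually.of_forall fun u => tendsto_integrand hαβ hχ hC u

lemma int_le_main {α β χ μ C : ℝ} (hαβ : |β| < α) (hχ : 0 < χ) (hC : 0 < C) (t : ℝ) :
    ∫ u in Ioi (0:ℝ), Real.exp ((α - β) * t)
        * (C * Real.exp (-(α * Real.sqrt (χ + (t + u - μ) ^ 2)) + β * (t + u - μ)))
      ≤ C * Real.exp ((α - β) * μ) / (α - β) := by
  have hl : 0 < α - β := by
    have := le_abs_self β; linarith [abs_nonneg β, hαβ]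
  rw [← bound_integral (l := α - β) (C := C) (μ := μ) hl]
  have hint : IntegrableOn (fun u : ℝ => Real.exp ((α - β) * t)
      * (C * Real.exp (-(α * Real.sqrt (χ + (t + u - μ) ^ 2)) + β * (t + u - μ)))) (Ioi 0) := by
    refine Integrable.mono' (g := fun u : ℝ => C * Real.exp ((α - β) * μ - (α - β) * u)) (bound_integrable hl) ?_ ?_
    · apply Continuous.aestronglyMeasurable; fun_prop
    · exact Eventually.of_forall fun u => by
        rw [Real.norm_eq_abs, abs_of_pos (by positivity)]
        exact integrand_le hαβ hχ hC t u
  exact setIntegral_mono_on hint (bound_integrable (l := α - β) (C := C) (μ := μ) hl) measurableSet_Ioi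
    (fun u _ => integrand_le hαβ hχ hC t u)


end TailAux

namespace GaussAux


variable {σ l : ℝ}

lemma V_ne_zero (hσ : 0 < σ) : (⟨σ ^ 2, sq_nonneg σ⟩ : NNReal) ≠ 0 := by
  intro h
  have := congrArg (fun x : NNReal => (x : ℝ)) h
  have : σ ^ 2 = 0 := this
  exact hσ.ne' (pow_eq_zero_iff two_ne_zero |>.mp this)

/-- transfer integrals over the Gaussian measure to Lebesgue integrals against the pdf. -/
lemma integral_gaussian_eq (hσ : 0 < σ) (h : ℝ → ℝ) :
    ∫ z, h z ∂(gaussianReal 0 ⟨σ ^ 2, sq_nonneg σ⟩)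
      = ∫ z, gaussianPDFReal 0 ⟨σ ^ 2, sq_nonneg σ⟩ z * h z := by
  rw [gaussianReal_of_var_ne_zero _ (V_ne_zero hσ)]
  rw [show (gaussianPDF 0 (⟨σ ^ 2, sq_nonneg σ⟩ : NNReal))
      = (fun x => ((gaussianPDFReal 0 ⟨σ ^ 2, sq_nonneg σ⟩ x).toNNReal : ENNReal)) from rfl]
  erw [integral_withDensity_eq_integral_smul (measurable_gaussianPDFReal _ _).real_toNNReal]
  congr 1
  funext z
  rw [NNReal.smul_def, smul_eq_mul]
  erw [Real.coe_toNNReal _ (gaussianPDFReal_nonneg _ _ _)]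

lemma integrable_gaussian_iff (hσ : 0 < σ) (h : ℝ → ℝ) :
    Integrable h (gaussianReal 0 ⟨σ ^ 2, sq_nonneg σ⟩)
      ↔ Integrable (fun z => gaussianPDFReal 0 ⟨σ ^ 2, sq_nonneg σ⟩ z * h z) volume := by
  rw [gaussianReal_of_var_ne_zero _ (V_ne_zero hσ)]
  rw [show (gaussianPDF 0 (⟨σ ^ 2, sq_nonneg σ⟩ : NNReal))
      = (fun x => ((gaussianPDFReal 0 ⟨σ ^ 2, sq_nonneg σ⟩ x).toNNReal : ENNReal)) from rfl]
  erw [integrable_withDensity_iff_integrable_smul (measurable_gaussianPDFReal _ _).real_toNNReal]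
  constructor <;> intro hh <;> refine hh.congr (Eventually.of_forall fun z => ?_) <;>
    simp only [NNReal.smul_def, smul_eq_mul] <;> erw [Real.coe_toNNReal _ (gaussianPDFReal_nonneg _ _ _)]

/-- The Gaussian exponential-shift identity. -/
lemma pdf_shift (hσ : 0 < σ) (z : ℝ) :
    gaussianPDFReal 0 ⟨σ ^ 2, sq_nonneg σ⟩ z * Real.exp (-(l * z))
      = Real.exp (l ^ 2 * σ ^ 2 / 2)
        * gaussianPDFReal 0 ⟨σ ^ 2, sq_nonneg σ⟩ (z + l * σ ^ 2) := by
  simp only [gaussianPDFReal, NNReal.coe_mk, sub_zero]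
  change (√(2 * π * σ ^ 2))⁻¹ * Real.exp (-z ^ 2 / (2 * σ ^ 2)) * Real.exp (-(l * z))
    = Real.exp (l ^ 2 * σ ^ 2 / 2) * ((√(2 * π * σ ^ 2))⁻¹ * Real.exp (-(z + l * σ ^ 2) ^ 2 / (2 * σ ^ 2)))
  rw [mul_assoc, ← Real.exp_add, mul_comm (Real.exp (l ^ 2 * σ ^ 2 / 2)),
    mul_assoc ((√(2 * π * σ ^ 2))⁻¹), ← Real.exp_add]
  congr 1
  have hσ2 : (σ:ℝ) ^ 2 ≠ 0 := by positivity
  field_simp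
  ring

lemma pdf_even (hσ : 0 < σ) (z : ℝ) :
    gaussianPDFReal 0 ⟨σ ^ 2, sq_nonneg σ⟩ |z| = gaussianPDFReal 0 ⟨σ ^ 2, sq_nonneg σ⟩ z := by
  simp only [gaussianPDFReal, sub_zero, sq_abs]

lemma integrable_exp_neg_mul (hσ : 0 < σ) (l : ℝ) :
    Integrable (fun z => Real.exp (-(l * z))) (gaussianReal 0 ⟨σ ^ 2, sq_nonneg σ⟩) := by
  rw [integrable_gaussian_iff hσ]
  have : (fun z => gaussianPDFReal 0 ⟨σ ^ 2, sq_nonneg σ⟩ z * Real.exp (-(l * z)))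
      = fun z => Real.exp (l ^ 2 * σ ^ 2 / 2)
          * gaussianPDFReal 0 ⟨σ ^ 2, sq_nonneg σ⟩ (z + l * σ ^ 2) := by
    funext z; exact pdf_shift hσ z
  rw [this]
  exact ((integrable_gaussianPDFReal _ _).comp_add_right _).const_mul _

lemma integral_exp_neg_mul (hσ : 0 < σ) (l : ℝ) :
    ∫ z, Real.exp (-(l * z)) ∂(gaussianReal 0 ⟨σ ^ 2, sq_nonneg σ⟩)
      = Real.exp (l ^ 2 * σ ^ 2 / 2) := by
  rw [integral_gaussian_eq hσ]
  simp_rw [pdf_shift hσ]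
  rw [integral_const_mul, integral_add_right_eq_self
    (fun x => gaussianPDFReal 0 ⟨σ ^ 2, sq_nonneg σ⟩ x) (l * σ ^ 2),
    integral_gaussianPDFReal_eq_one _ (V_ne_zero hσ), mul_one]


variable {σ l : ℝ}

lemma map_neg_sigma (hσ : 0 < σ) (hl : 0 < l) :
    gaussianReal 0 ⟨σ ^ 2, sq_nonneg σ⟩ (Ioi (l * σ ^ 2))
      = gaussianReal 0 1 (Iio (-(l * σ))) := by
  have hmap := gaussianReal_map_const_mul (μ := 0) (v := 1) (-σ)
  have hV : (⟨(-σ) ^ 2, sq_nonneg _⟩ * 1 : NNReal) = ⟨σ ^ 2, sq_nonneg σ⟩ := by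
    apply NNReal.coe_injective
    show (-σ) ^ 2 * 1 = σ ^ 2
    ring
  rw [mul_zero] at hmap
  erw [hV] at hmap
  rw [← hmap, Measure.map_apply (measurable_const_mul _) measurableSet_Ioi]
  congr 1
  ext x
  simp only [mem_preimage, mem_Ioi, mem_Iio]
  constructor
  · intro h; nlinarith
  · intro h; nlinarith

lemma gauss1_Iio_eq_Iic (c : ℝ) :
    gaussianReal 0 1 (Iio c) = gaussianReal 0 1 (Iic c) := by
  have hs : gaussianReal 0 1 {c} = 0 :=
    gaussianReal_absolutelyContinuous 0 one_ne_zero (measure_singleton c)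
  refine le_antisymm (measure_mono Iio_subset_Iic_self) ?_
  calc gaussianReal 0 1 (Iic c) = gaussianReal 0 1 (Iio c ∪ {c}) := by rw [Iio_union_right]
  _ ≤ gaussianReal 0 1 (Iio c) + gaussianReal 0 1 {c} := measure_union_le _ _
  _ = gaussianReal 0 1 (Iio c) := by rw [hs, add_zero]

lemma setIntegral_pdf_eq (hσ : 0 < σ) (s : Set ℝ) :
    ∫ x in s, gaussianPDFReal 0 ⟨σ ^ 2, sq_nonneg σ⟩ x
      = (gaussianReal 0 ⟨σ ^ 2, sq_nonneg σ⟩ s).toReal := by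
  rw [gaussianReal_apply_eq_integral 0 (V_ne_zero hσ) s]
  erw [ENNReal.toReal_ofReal (integral_nonneg fun x => gaussianPDFReal_nonneg _ _ _)]

lemma integral_exp_neg_abs (hσ : 0 < σ) (hl : 0 < l) :
    ∫ z, Real.exp (-(l * |z|)) ∂(gaussianReal 0 ⟨σ ^ 2, sq_nonneg σ⟩)
      = 2 * Real.exp (l ^ 2 * σ ^ 2 / 2) * (gaussianReal 0 1 (Iic (-(l * σ)))).toReal := by
  rw [integral_gaussian_eq hσ]
  have h1 : ∀ z : ℝ, gaussianPDFReal 0 ⟨σ ^ 2, sq_nonneg σ⟩ z * Real.exp (-(l * |z|))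
      = (fun w => gaussianPDFReal 0 ⟨σ ^ 2, sq_nonneg σ⟩ w * Real.exp (-(l * w))) |z| := by
    intro z; simp only; rw [pdf_even hσ]
  simp_rw [h1]
  rw [integral_comp_abs
    (f := fun w => gaussianPDFReal 0 ⟨σ ^ 2, sq_nonneg σ⟩ w * Real.exp (-(l * w)))]
  simp_rw [pdf_shift hσ]
  rw [integral_const_mul]
  have h3 := (measurePreserving_add_right volume (l * σ ^ 2)).setIntegral_preimage_emb
    ((Homeomorph.addRight (l * σ ^ 2)).isClosedEmbedding.measurableEmbedding)
    (fun x => gaussianPDFReal 0 ⟨σ ^ 2, sq_nonneg σ⟩ x) (Ioi (l * σ ^ 2))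
  have hpre : (fun x => x + l * σ ^ 2) ⁻¹' (Ioi (l * σ ^ 2)) = Ioi 0 := by
    ext x; simp
  rw [hpre] at h3
  rw [h3, setIntegral_pdf_eq hσ, map_neg_sigma hσ hl, gauss1_Iio_eq_Iic]
  ring


end GaussAux


end AuxLemmas

/-- Upper tail dependence of the Hyperbolic-Normal Principal Component Copula:
`lim_{y → +∞} ℙ(Y₁ ≥ y, Y₂ ≥ y) / ℙ(Y₂ ≥ y) = 2 Φ(-(α-β)σ)`. -/
theorem hyperbolic_normal_pcc_upper_tail_dependence
    {Ω : Type*} [MeasureSpace Ω] [IsProbabilityMeasure (ℙ : Measure Ω)]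
    (P₁ P₂ : Ω → ℝ) (hP₁ : Measurable P₁) (hP₂ : Measurable P₂)
    (hindep : IndepFun P₁ P₂ ℙ)
    (α β χ μ C : ℝ) (hαβ : |β| < α) (hχ : 0 < χ) (hC : 0 < C)
    (f₁ : ℝ → ℝ)
    (hf₁ : ∀ x, f₁ x = C * Real.exp (-(α * Real.sqrt (χ + (x - μ) ^ 2)) + β * (x - μ)))
    (hP₁law : Measure.map P₁ ℙ = volume.withDensity fun x => ENNReal.ofReal (f₁ x))
    (σ : ℝ) (hσ : 0 < σ)
    (hP₂law : Measure.map P₂ ℙ = gaussianReal 0 ⟨σ ^ 2, sq_nonneg σ⟩)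
    (Y₁ Y₂ : Ω → ℝ)
    (hY₁ : ∀ ω, Y₁ ω = (P₁ ω + P₂ ω) / Real.sqrt 2)
    (hY₂ : ∀ ω, Y₂ ω = (P₁ ω - P₂ ω) / Real.sqrt 2) :
    Tendsto
      (fun y : ℝ =>
        (ℙ {ω | y ≤ Y₁ ω ∧ y ≤ Y₂ ω}).toReal / (ℙ {ω | y ≤ Y₂ ω}).toReal)
      atTop (nhds (2 * stdNormalCDF (-((α - β) * σ)))) := by
  classical
  have hfe : f₁ = fun x => C * Real.exp (-(α * Real.sqrt (χ + (x - μ) ^ 2)) + β * (x - μ)) :=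
    funext hf₁
  subst hfe
  have hl : 0 < α - β := by
    have := le_abs_self β; linarith [abs_nonneg β, hαβ]
  set l : ℝ := α - β with hl_def
  set V : NNReal := ⟨σ ^ 2, sq_nonneg σ⟩ with hV_def
  set μ₁ : Measure ℝ := Measure.map P₁ ℙ with hμ₁_def
  set μ₂ : Measure ℝ := Measure.map P₂ ℙ with hμ₂_def
  haveI : IsProbabilityMeasure μ₁ := Measure.isProbabilityMeasure_map hP₁.aemeasurable
  haveI : IsProbabilityMeasure μ₂ := Measure.isProbabilityMeasure_map hP₂.aemeasurable
  -- the tail function of P₁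
  set ggE : ℝ → ENNReal := fun t => μ₁ (Set.Ici t) with hggE_def
  have hAnti : Antitone ggE := fun a b hab =>
    measure_mono (Set.Ici_subset_Ici.mpr hab)
  have hMeasE : Measurable ggE := hAnti.measurable
  set gg : ℝ → ℝ := fun t => (ggE t).toReal with hgg_def
  have hMg : Measurable gg := ENNReal.measurable_toReal.comp hMeasE
  have hggnn : ∀ t, 0 ≤ gg t := fun t => ENNReal.toReal_nonneg
  -- gg as an integral
  have hf₁cont : Continuous (fun x : ℝ =>
      C * Real.exp (-(α * Real.sqrt (χ + (x - μ) ^ 2)) + β * (x - μ))) := by fun_prop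
  have hf₁nn : ∀ x : ℝ, 0 ≤ C * Real.exp (-(α * Real.sqrt (χ + (x - μ) ^ 2)) + β * (x - μ)) :=
    fun x => by positivity
  have hg_eq : ∀ t : ℝ, gg t
      = ∫ x in Set.Ici t, C * Real.exp (-(α * Real.sqrt (χ + (x - μ) ^ 2)) + β * (x - μ)) := by
    intro t
    rw [hgg_def]
    simp only [hggE_def]
    rw [hP₁law, withDensity_apply _ measurableSet_Ici]
    rw [integral_eq_lintegral_of_nonneg_ae (Filter.Eventually.of_forall fun x => hf₁nn x)
      hf₁cont.aestronglyMeasurable.restrict]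
  -- shift the integral
  have hshift : ∀ t : ℝ, (∫ x in Set.Ici t,
        C * Real.exp (-(α * Real.sqrt (χ + (x - μ) ^ 2)) + β * (x - μ)))
      = ∫ u in Set.Ioi (0:ℝ),
        C * Real.exp (-(α * Real.sqrt (χ + (t + u - μ) ^ 2)) + β * (t + u - μ)) := by
    intro t
    rw [MeasureTheory.integral_Ici_eq_integral_Ioi]
    have h3 := (measurePreserving_add_right volume t).setIntegral_preimage_emb
      ((Homeomorph.addRight t).isClosedEmbedding.measurableEmbedding)
      (fun x => C * Real.exp (-(α * Real.sqrt (χ + (x - μ) ^ 2)) + β * (x - μ))) (Set.Ioi t)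
    have hpre : (fun x : ℝ => x + t) ⁻¹' (Set.Ioi t) = Set.Ioi 0 := by
      ext x; simp
    rw [hpre] at h3
    rw [← h3]
    congr 1
    funext u
    rw [add_comm u t]
  -- the normalized tail function
  have hGdef : ∀ t : ℝ, Real.exp (l * t) * gg t
      = ∫ u in Set.Ioi (0:ℝ), Real.exp (l * t)
          * (C * Real.exp (-(α * Real.sqrt (χ + (t + u - μ) ^ 2)) + β * (t + u - μ))) := by
    intro t
    rw [hg_eq, hshift, ← integral_const_mul]
  set L : ℝ := C * Real.exp (l * μ) / l with hL_def
  have hLpos : 0 < L := by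
    rw [hL_def]; positivity
  have hGlim : Tendsto (fun t => Real.exp (l * t) * gg t) atTop (nhds L) := by
    have h := TailAux.tendsto_main (μ := μ) hαβ hχ hC
    have heq : ∀ t : ℝ, (∫ u in Set.Ioi (0:ℝ), Real.exp ((α - β) * t)
        * (C * Real.exp (-(α * Real.sqrt (χ + (t + u - μ) ^ 2)) + β * (t + u - μ))))
        = Real.exp (l * t) * gg t := fun t => (hGdef t).symm
    exact h.congr heq
  have hGle : ∀ t : ℝ, Real.exp (l * t) * gg t ≤ L := by
    intro t
    rw [hGdef t]
    exact TailAux.int_le_main hαβ hχ hC t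
  -- reduce the events to the product measure
  have hsqrt2 : (0:ℝ) < Real.sqrt 2 := Real.sqrt_pos.mpr two_pos
  have hprod : Measure.map (fun ω => (P₁ ω, P₂ ω)) ℙ = μ₁.prod μ₂ :=
    (indepFun_iff_map_prod_eq_prod_map_map hP₁.aemeasurable hP₂.aemeasurable).mp hindep
  have hS1 : ∀ c : ℝ, MeasurableSet {p : ℝ × ℝ | c + |p.2| ≤ p.1} := fun c =>
    measurableSet_le (by fun_prop) measurable_fst
  have hS2 : ∀ c : ℝ, MeasurableSet {p : ℝ × ℝ | c + p.2 ≤ p.1} := fun c =>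
    measurableSet_le (by fun_prop) measurable_fst
  have hNum : ∀ y : ℝ, (ℙ {ω | y ≤ Y₁ ω ∧ y ≤ Y₂ ω}).toReal
      = ∫ z, gg (y * Real.sqrt 2 + |z|) ∂μ₂ := by
    intro y
    have hEv : {ω | y ≤ Y₁ ω ∧ y ≤ Y₂ ω}
        = (fun ω => (P₁ ω, P₂ ω)) ⁻¹' {p : ℝ × ℝ | y * Real.sqrt 2 + |p.2| ≤ p.1} := by
      ext ω
      simp only [Set.mem_setOf_eq, Set.mem_preimage, hY₁, hY₂, le_div_iff₀ hsqrt2]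
      constructor
      · rintro ⟨h1, h2⟩
        have habs : |P₂ ω| ≤ P₁ ω - y * Real.sqrt 2 :=
          abs_le.mpr ⟨by linarith, by linarith⟩
        linarith
      · intro h
        have habs : |P₂ ω| ≤ P₁ ω - y * Real.sqrt 2 := by linarith
        obtain ⟨ha, hb⟩ := abs_le.mp habs
        exact ⟨by linarith, by linarith⟩
    rw [hEv, ← Measure.map_apply (hP₁.prodMk hP₂) (hS1 _), hprod,
      Measure.prod_apply_symm (hS1 _)]
    have hsl : ∀ z : ℝ, (fun x : ℝ => (x, z)) ⁻¹' {p : ℝ × ℝ | y * Real.sqrt 2 + |p.2| ≤ p.1}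
        = Set.Ici (y * Real.sqrt 2 + |z|) := by
      intro z; ext x; simp [Set.mem_Ici]
    simp_rw [hsl]
    exact (integral_toReal ((hMeasE.comp (measurable_abs.const_add _)).aemeasurable)
      (Filter.Eventually.of_forall fun z => measure_lt_top μ₁ _)).symm
  have hDen : ∀ y : ℝ, (ℙ {ω | y ≤ Y₂ ω}).toReal
      = ∫ z, gg (y * Real.sqrt 2 + z) ∂μ₂ := by
    intro y
    have hEv : {ω | y ≤ Y₂ ω}
        = (fun ω => (P₁ ω, P₂ ω)) ⁻¹' {p : ℝ × ℝ | y * Real.sqrt 2 + p.2 ≤ p.1} := by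
      ext ω
      simp only [Set.mem_setOf_eq, Set.mem_preimage, hY₂, le_div_iff₀ hsqrt2]
      constructor
      · intro h; linarith
      · intro h; linarith
    rw [hEv, ← Measure.map_apply (hP₁.prodMk hP₂) (hS2 _), hprod,
      Measure.prod_apply_symm (hS2 _)]
    have hsl : ∀ z : ℝ, (fun x : ℝ => (x, z)) ⁻¹' {p : ℝ × ℝ | y * Real.sqrt 2 + p.2 ≤ p.1}
        = Set.Ici (y * Real.sqrt 2 + z) := by
      intro z; ext x; simp [Set.mem_Ici]
    simp_rw [hsl]
    exact (integral_toReal ((hMeasE.comp (measurable_id.const_add _)).aemeasurable)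
      (Filter.Eventually.of_forall fun z => measure_lt_top μ₁ _)).symm
  -- numerator convergence
  set E : ℝ := Real.exp (l ^ 2 * σ ^ 2 / 2) with hE_def
  set Φv : ℝ := stdNormalCDF (-(l * σ)) with hΦ_def
  have hμ₂g : μ₂ = gaussianReal 0 V := hP₂law
  have hIntAbs : ∫ z, Real.exp (-(l * |z|)) ∂μ₂ = 2 * E * Φv := by
    rw [hμ₂g, hV_def, GaussAux.integral_exp_neg_abs hσ hl]
    rfl
  have hIntExp : ∫ z, Real.exp (-(l * z)) ∂μ₂ = E := by
    rw [hμ₂g, hV_def, GaussAux.integral_exp_neg_mul hσ l]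
  have hIntegrableExp : Integrable (fun z => Real.exp (-(l * z))) μ₂ := by
    rw [hμ₂g, hV_def]; exact GaussAux.integrable_exp_neg_mul hσ l
  have hFn : Tendsto (fun s => ∫ z, Real.exp (l * s) * gg (s + |z|) ∂μ₂) atTop
      (nhds (L * (2 * E * Φv))) := by
    have key := tendsto_integral_filter_of_dominated_convergence (μ := μ₂) (l := atTop)
      (F := fun s z => Real.exp (-(l * |z|)) * (Real.exp (l * (s + |z|)) * gg (s + |z|)))
      (f := fun z => Real.exp (-(l * |z|)) * L)
      (bound := fun _ => L) ?_ ?_ (integrable_const L) ?_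
    · have h1 : (fun s => ∫ z, Real.exp (l * s) * gg (s + |z|) ∂μ₂)
          = fun s => ∫ z, Real.exp (-(l * |z|)) * (Real.exp (l * (s + |z|)) * gg (s + |z|)) ∂μ₂ := by
        funext s
        congr 1
        funext z
        rw [← mul_assoc, ← Real.exp_add]
        ring_nf
      rw [h1]
      have h2 : ∫ z, Real.exp (-(l * |z|)) * L ∂μ₂ = L * (2 * E * Φv) := by
        rw [integral_mul_const, hIntAbs]; ring
      rw [← h2]
      exact key
    · refine Filter.Eventually.of_forall fun s => ?_
      exact (((measurable_abs.const_mul l).neg.exp).mul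
        (((measurable_abs.const_add s).const_mul l).exp.mul
          (hMg.comp (measurable_abs.const_add s)))).aestronglyMeasurable
    · refine Filter.Eventually.of_forall fun s => Filter.Eventually.of_forall fun z => ?_
      have h1 : Real.exp (-(l * |z|)) ≤ 1 := by
        rw [Real.exp_le_one_iff]
        have : 0 ≤ l * |z| := mul_nonneg hl.le (abs_nonneg z)
        linarith
      have h2 := hGle (s + |z|)
      have h3 : 0 ≤ Real.exp (l * (s + |z|)) * gg (s + |z|) :=
        mul_nonneg (Real.exp_pos _).le (hggnn _)
      rw [Real.norm_eq_abs, abs_of_nonneg (mul_nonneg (Real.exp_pos _).le h3)]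
      calc Real.exp (-(l * |z|)) * (Real.exp (l * (s + |z|)) * gg (s + |z|))
          ≤ 1 * (Real.exp (l * (s + |z|)) * gg (s + |z|)) :=
            mul_le_mul_of_nonneg_right h1 h3
        _ = Real.exp (l * (s + |z|)) * gg (s + |z|) := one_mul _
        _ ≤ L := h2
    · refine Filter.Eventually.of_forall fun z => ?_
      exact (hGlim.comp (tendsto_atTop_add_const_right atTop |z| tendsto_id)).const_mul _
  -- denominator convergence
  have hFd : Tendsto (fun s => ∫ z, Real.exp (l * s) * gg (s + z) ∂μ₂) atTop
      (nhds (L * E)) := by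
    have key := tendsto_integral_filter_of_dominated_convergence (μ := μ₂) (l := atTop)
      (F := fun s z => Real.exp (-(l * z)) * (Real.exp (l * (s + z)) * gg (s + z)))
      (f := fun z => Real.exp (-(l * z)) * L)
      (bound := fun z => Real.exp (-(l * z)) * L) ?_ ?_ (hIntegrableExp.mul_const L) ?_
    · have h1 : (fun s => ∫ z, Real.exp (l * s) * gg (s + z) ∂μ₂)
          = fun s => ∫ z, Real.exp (-(l * z)) * (Real.exp (l * (s + z)) * gg (s + z)) ∂μ₂ := by
        funext s
        congr 1
        funext z
        rw [← mul_assoc, ← Real.exp_add]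
        ring_nf
      rw [h1]
      have h2 : ∫ z, Real.exp (-(l * z)) * L ∂μ₂ = L * E := by
        rw [integral_mul_const, hIntExp]; ring
      rw [← h2]
      exact key
    · refine Filter.Eventually.of_forall fun s => ?_
      exact (((measurable_id.const_mul l).neg.exp).mul
        (((measurable_id.const_add s).const_mul l).exp.mul
          (hMg.comp (measurable_id.const_add s)))).aestronglyMeasurable
    · refine Filter.Eventually.of_forall fun s => Filter.Eventually.of_forall fun z => ?_
      have h2 := hGle (s + z)
      have h3 : 0 ≤ Real.exp (l * (s + z)) * gg (s + z) :=
        mul_nonneg (Real.exp_pos _).le (hggnn _)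
      rw [Real.norm_eq_abs, abs_of_nonneg (mul_nonneg (Real.exp_pos _).le h3)]
      exact mul_le_mul_of_nonneg_left h2 (Real.exp_pos _).le
    · refine Filter.Eventually.of_forall fun z => ?_
      exact (hGlim.comp (tendsto_atTop_add_const_right atTop z tendsto_id)).const_mul _
  -- combine
  have hEpos : 0 < E := Real.exp_pos _
  have hLE : L * E ≠ 0 := by positivity
  have hratio : Tendsto (fun s =>
      (∫ z, Real.exp (l * s) * gg (s + |z|) ∂μ₂) / (∫ z, Real.exp (l * s) * gg (s + z) ∂μ₂))
      atTop (nhds (2 * Φv)) := by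
    have h := hFn.div hFd hLE
    have hval : L * (2 * E * Φv) / (L * E) = 2 * Φv := by
      field_simp
    rwa [hval] at h
  have hcomp : Tendsto (fun y : ℝ => y * Real.sqrt 2) atTop atTop :=
    Tendsto.atTop_mul_const hsqrt2 tendsto_id
  have hfinal := hratio.comp hcomp
  have hΦeq : Φv = stdNormalCDF (-((α - β) * σ)) := by rw [hΦ_def]
  rw [hΦeq] at hfinal
  refine hfinal.congr fun y => ?_
  simp only [Function.comp_apply]
  rw [hNum y, hDen y]
  have hInt1 : ∫ z, Real.exp (l * (y * Real.sqrt 2)) * gg (y * Real.sqrt 2 + |z|) ∂μ₂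
      = Real.exp (l * (y * Real.sqrt 2)) * ∫ z, gg (y * Real.sqrt 2 + |z|) ∂μ₂ :=
    integral_const_mul _ _
  have hInt2 : ∫ z, Real.exp (l * (y * Real.sqrt 2)) * gg (y * Real.sqrt 2 + z) ∂μ₂
      = Real.exp (l * (y * Real.sqrt 2)) * ∫ z, gg (y * Real.sqrt 2 + z) ∂μ₂ :=
    integral_const_mul _ _
  rw [hInt1, hInt2, mul_div_mul_left _ _ (Real.exp_ne_zero _)]
end

section
/- (Gil-Pelaez inversion) Let Y be a real-valued random variable whose distribution has no atoms, with cumulative distribution function F and characteristic function φ(t) = E[exp(i·t·Y)]. Then for every y ∈ ℝ, F(y) = 1/2 − (1/π)·lim_{ε→0⁺, T→∞} ∫_ε^T Im(exp(−i·t·y)·φ(t))/t dt, where the improper integral is understood as the limit of the integrals over [ε, T]. -/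
open MeasureTheory ProbabilityTheory Filter Complex Set

noncomputable def Si (x : ℝ) : ℝ := ∫ t in Set.Ioc 0 x, Real.sin t / t

lemma sin_div_bound {t : ℝ} (ht : 0 < t) : ‖Real.sin t / t‖ ≤ 1 := by
  rw [Real.norm_eq_abs, abs_div]
  rw [div_le_one (by positivity)]
  calc |Real.sin t| ≤ |t| := Real.abs_sin_le_abs
  _ = _ := rfl

lemma integrableOn_sin_div {y x : ℝ} (hy : 0 ≤ y) :
    IntegrableOn (fun t => Real.sin t / t) (Set.Ioc y x) := by
  apply Integrable.mono' (integrable_const (1 : ℝ))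
  · exact (Real.measurable_sin.div measurable_id).aestronglyMeasurable
  · filter_upwards [ae_restrict_mem measurableSet_Ioc] with t ht
    exact sin_div_bound (lt_of_le_of_lt hy ht.1)

lemma Si_nonpos {x : ℝ} (hx : x ≤ 0) : Si x = 0 := by
  unfold Si
  rw [Set.Ioc_eq_empty (by exact fun h => absurd (h.trans_le hx) (lt_irrefl 0)), Measure.restrict_empty, integral_zero_measure]

lemma Si_diff {y x : ℝ} (hy : 0 ≤ y) (hyx : y ≤ x) :
    ∫ t in Set.Ioc y x, Real.sin t / t = Si x - Si y := by
  have h : Si x = Si y + ∫ t in Set.Ioc y x, Real.sin t / t := by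
    unfold Si
    rw [← setIntegral_union (Set.Ioc_disjoint_Ioc_of_le le_rfl) measurableSet_Ioc
      (integrableOn_sin_div le_rfl) (integrableOn_sin_div hy),
      Set.Ioc_union_Ioc_eq_Ioc hy hyx]
  linarith

lemma abs_Si_sub_le {y x : ℝ} (hy : 0 ≤ y) (hyx : y ≤ x) : |Si x - Si y| ≤ x - y := by
  rw [← Si_diff hy hyx]
  have := norm_setIntegral_le_of_norm_le_const (μ := volume) (s := Set.Ioc y x)
    (f := fun t => Real.sin t / t) (C := 1) (by simp [Real.volume_Ioc])
    (fun t ht => sin_div_bound (lt_of_le_of_lt hy ht.1))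
  rw [Measure.real, Real.volume_Ioc, one_mul, ENNReal.toReal_ofReal (by linarith)] at this
  exact this

lemma abs_Si_le {x : ℝ} (hx : 0 ≤ x) : |Si x| ≤ x := by
  simpa [Si_nonpos le_rfl] using abs_Si_sub_le le_rfl hx

lemma lipschitz_Si : ∀ x z : ℝ, |Si x - Si z| ≤ |x - z| := by
  have key : ∀ x z : ℝ, z ≤ x → |Si x - Si z| ≤ |x - z| := by
    intro x z hzx
    rcases le_or_gt x 0 with hx | hx
    · simp [Si_nonpos hx, Si_nonpos (hzx.trans hx)]
    rcases le_or_gt 0 z with hz | hz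
    · calc |Si x - Si z| ≤ x - z := abs_Si_sub_le hz hzx
      _ ≤ |x - z| := le_abs_self _
    · calc |Si x - Si z| = |Si x| := by rw [Si_nonpos hz.le, sub_zero]
      _ ≤ x := abs_Si_le hx.le
      _ ≤ x - z := by linarith
      _ ≤ |x - z| := le_abs_self _
  intro x z
  rcases le_total z x with h | h
  · exact key x z h
  · rw [← abs_neg, neg_sub, ← abs_neg (x - z), neg_sub]; exact key z x h

lemma continuous_Si : Continuous Si := by
  apply LipschitzWith.continuous (K := 1)
  apply LipschitzWith.of_dist_le_mul
  intro x z
  rw [Real.dist_eq, Real.dist_eq, NNReal.coe_one, one_mul]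
  exact lipschitz_Si x z
open Topology
lemma laplace {t : ℝ} (ht : 0 < t) : ∫ s in Set.Ioi (0:ℝ), Real.exp (-(t*s)) = 1/t := by
  have := integral_comp_mul_left_Ioi (fun u => Real.exp (-u)) 0 ht
  simp only [mul_zero, integral_exp_neg_Ioi, neg_zero, Real.exp_zero, smul_eq_mul, mul_one] at this
  rw [this, one_div]

lemma inner_int {s A : ℝ} (hs : 0 ≤ s) (hA : 0 ≤ A) :
    ∫ t in Set.Ioc 0 A, Real.exp (-(s*t)) * Real.sin t
      = (1 - Real.exp (-(s*A)) * (Real.cos A + s * Real.sin A)) / (1 + s^2) := by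
  set c : ℂ := -s + Complex.I with hc
  have hcne : c ≠ 0 := by
    intro h
    have : (c).im = 0 := by rw [h]; simp
    simp [hc] at this
  have hre : ∀ t : ℝ, (c * t).re = -(s*t) := by
    intro t; simp [hc, Complex.mul_re]
  have him : ∀ t : ℝ, (c * t).im = t := by
    intro t; simp [hc, Complex.mul_im]
  have key : ∀ t : ℝ, Real.exp (-(s*t)) * Real.sin t = (Complex.exp (c * t)).im := by
    intro t
    rw [Complex.exp_im, hre, him]
  have hint : IntegrableOn (fun t : ℝ => Complex.exp (c * t)) (Set.Ioc 0 A) := by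
    apply Integrable.mono' (integrable_const (1 : ℝ))
    · exact (Complex.continuous_exp.comp (continuous_const.mul Complex.continuous_ofReal)).aestronglyMeasurable
    · filter_upwards [ae_restrict_mem measurableSet_Ioc] with t htm
      rw [Complex.norm_exp, hre]
      rw [Real.exp_le_one_iff]
      rw [neg_nonpos]
      exact mul_nonneg hs htm.1.le
  calc ∫ t in Set.Ioc 0 A, Real.exp (-(s*t)) * Real.sin t
      = ∫ t in Set.Ioc 0 A, (Complex.exp (c * t)).im := by
        apply setIntegral_congr_fun measurableSet_Ioc
        intro t _; exact key t
    _ = (∫ t in Set.Ioc 0 A, Complex.exp (c * t)).im := integral_im hint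
    _ = (∫ t in (0:ℝ)..A, Complex.exp (c * t)).im := by
        rw [intervalIntegral.integral_of_le hA]
    _ = ((Complex.exp (c * A) - Complex.exp (c * 0)) / c).im := by
        rw [integral_exp_mul_complex hcne]; norm_num
    _ = (1 - Real.exp (-(s*A)) * (Real.cos A + s * Real.sin A)) / (1 + s^2) := by
        rw [Complex.div_im]
        simp only [Complex.sub_re, Complex.sub_im, Complex.exp_re, Complex.exp_im,
          hre, him, Complex.ofReal_zero, mul_zero, Complex.one_re, Complex.one_im]
        have hns : Complex.normSq c = 1 + s^2 := by
          simp [hc, Complex.normSq_apply]; ring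
        rw [hns]
        have h1 : (1:ℝ) + s^2 ≠ 0 := by positivity
        have hcre : c.re = -s := by simp [hc]
        have hcim : c.im = 1 := by simp [hc]
        rw [hcre, hcim]
        simp only [Complex.zero_re, Complex.zero_im, Real.exp_zero, Real.cos_zero,
          Real.sin_zero, mul_one, mul_zero]
        field_simp
        ring
lemma errb (A : ℝ) {s : ℝ} (hs : 0 ≤ s) :
    ‖Real.exp (-(s*A)) * (Real.cos A + s * Real.sin A) / (1+s^2)‖ ≤ 2 * Real.exp (-(A*s)) := by
  rw [Real.norm_eq_abs, abs_div, abs_mul, abs_of_pos (Real.exp_pos _),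
    abs_of_pos (show (0:ℝ) < 1 + s^2 by positivity), mul_comm s A]
  have h1 : |Real.cos A + s * Real.sin A| ≤ 1 + s := by
    calc |Real.cos A + s * Real.sin A| ≤ |Real.cos A| + |s * Real.sin A| := abs_add_le _ _
    _ ≤ 1 + s := by
        apply add_le_add (Real.abs_cos_le_one A)
        rw [abs_mul, _root_.abs_of_nonneg hs]
        calc s * |Real.sin A| ≤ s * 1 := by
              exact mul_le_mul_of_nonneg_left (Real.abs_sin_le_one A) hs
        _ = s := mul_one s
  rw [div_le_iff₀ (by positivity)]
  have he : (0:ℝ) < Real.exp (-(A*s)) := Real.exp_pos _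
  nlinarith [he, sq_nonneg s, sq_nonneg (s-1)]

lemma err_integrable {A : ℝ} (hA : 0 < A) :
    IntegrableOn (fun s => Real.exp (-(s*A)) * (Real.cos A + s * Real.sin A) / (1+s^2))
      (Set.Ioi (0:ℝ)) := by
  have hg : IntegrableOn (fun s => 2 * Real.exp (-(A*s))) (Set.Ioi (0:ℝ)) := by
    simpa [neg_mul, IntegrableOn] using (exp_neg_integrableOn_Ioi 0 hA).const_mul 2
  apply Integrable.mono' hg
  · apply Continuous.aestronglyMeasurable
    apply Continuous.div (by fun_prop) (by fun_prop) (fun s => by positivity)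
  · filter_upwards [ae_restrict_mem measurableSet_Ioi] with s hsm
    exact errb A (le_of_lt hsm)

lemma err_bound {A : ℝ} (hA : 0 < A) :
    ‖∫ s in Set.Ioi (0:ℝ), Real.exp (-(s*A)) * (Real.cos A + s * Real.sin A) / (1+s^2)‖ ≤ 2/A := by
  have hg : IntegrableOn (fun s => 2 * Real.exp (-(A*s))) (Set.Ioi (0:ℝ)) := by
    simpa [neg_mul, IntegrableOn] using (exp_neg_integrableOn_Ioi 0 hA).const_mul 2
  calc ‖∫ s in Set.Ioi (0:ℝ), Real.exp (-(s*A)) * (Real.cos A + s * Real.sin A) / (1+s^2)‖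
      ≤ ∫ s in Set.Ioi (0:ℝ), 2 * Real.exp (-(A*s)) := by
        apply norm_integral_le_of_norm_le hg
        filter_upwards [ae_restrict_mem measurableSet_Ioi] with s hsm
        exact errb A (le_of_lt hsm)
    _ = 2 * (1/A) := by rw [integral_const_mul, laplace hA]
    _ = 2/A := by ring

set_option maxHeartbeats 1600000 in
lemma Si_eq {A : ℝ} (hA : 0 < A) :
    Si A = ∫ s in Set.Ioi (0:ℝ),
      (1 - Real.exp (-(s*A)) * (Real.cos A + s * Real.sin A)) / (1+s^2) := by
  have hmeas : AEStronglyMeasurable (Function.uncurry fun t s => Real.sin t * Real.exp (-(t*s)))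
      ((volume.restrict (Set.Ioc 0 A)).prod (volume.restrict (Set.Ioi 0))) := by
    apply Continuous.aestronglyMeasurable
    apply Continuous.mul
    · exact Real.continuous_sin.comp continuous_fst
    · exact Real.continuous_exp.comp (continuous_fst.mul continuous_snd).neg
  have hfint : Integrable (Function.uncurry fun t s => Real.sin t * Real.exp (-(t*s)))
      ((volume.restrict (Set.Ioc 0 A)).prod (volume.restrict (Set.Ioi 0))) := by
    rw [MeasureTheory.integrable_prod_iff hmeas]
    constructor
    · filter_upwards [ae_restrict_mem measurableSet_Ioc] with t ht
      have : IntegrableOn (fun s => Real.exp (-(t*s))) (Set.Ioi (0:ℝ)) := by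
        simpa [neg_mul] using exp_neg_integrableOn_Ioi 0 ht.1
      simp only [Function.uncurry_apply_pair]
      exact this.const_mul _
    · have habs : IntegrableOn (fun t => |Real.sin t / t|) (Set.Ioc 0 A) volume :=
        (integrableOn_sin_div le_rfl).abs
      apply Integrable.congr habs
      filter_upwards [ae_restrict_mem measurableSet_Ioc] with t ht
      have hn : ∀ s : ℝ, ‖Real.sin t * Real.exp (-(t*s))‖ = |Real.sin t| * Real.exp (-(t*s)) := by
        intro s
        rw [norm_mul, Real.norm_eq_abs, Real.norm_eq_abs, abs_of_pos (Real.exp_pos _)]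
      simp only [Function.uncurry_apply_pair, hn]
      rw [integral_const_mul, laplace ht.1, abs_div, abs_of_pos ht.1]
      ring
  have hswap := MeasureTheory.integral_integral_swap hfint
  calc Si A = ∫ t in Set.Ioc 0 A, ∫ s in Set.Ioi (0:ℝ), Real.sin t * Real.exp (-(t*s)) := by
        unfold Si
        apply setIntegral_congr_fun measurableSet_Ioc
        intro t ht
        show Real.sin t / t = ∫ s in Set.Ioi (0:ℝ), Real.sin t * Real.exp (-(t*s))
        rw [integral_const_mul, laplace ht.1]
        ring
    _ = ∫ s in Set.Ioi (0:ℝ), ∫ t in Set.Ioc 0 A, Real.sin t * Real.exp (-(t*s)) := hswap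
    _ = ∫ s in Set.Ioi (0:ℝ),
          (1 - Real.exp (-(s*A)) * (Real.cos A + s * Real.sin A)) / (1+s^2) := by
        apply setIntegral_congr_fun measurableSet_Ioi
        intro s hs
        show (∫ t in Set.Ioc 0 A, Real.sin t * Real.exp (-(t*s)))
          = (1 - Real.exp (-(s*A)) * (Real.cos A + s * Real.sin A)) / (1+s^2)
        have heq : ∀ t : ℝ, Real.sin t * Real.exp (-(t*s)) = Real.exp (-(s*t)) * Real.sin t := by
          intro t; rw [mul_comm, mul_comm t s]
        simp only [heq]
        exact inner_int (le_of_lt hs) (le_of_lt hA)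

lemma Si_tendsto : Tendsto Si atTop (𝓝 (Real.pi/2)) := by
  have herr : Tendsto (fun A => ∫ s in Set.Ioi (0:ℝ),
      Real.exp (-(s*A)) * (Real.cos A + s * Real.sin A) / (1+s^2)) atTop (𝓝 0) := by
    refine squeeze_zero_norm' ?_ (show Tendsto (fun A : ℝ => 2/A) atTop (𝓝 0) from
      Tendsto.div_atTop tendsto_const_nhds tendsto_id)
    filter_upwards [eventually_gt_atTop 0] with A hA
    exact err_bound hA
  have hsplit : ∀ᶠ A in atTop, Real.pi/2 - (∫ s in Set.Ioi (0:ℝ),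
      Real.exp (-(s*A)) * (Real.cos A + s * Real.sin A) / (1+s^2)) = Si A := by
    filter_upwards [eventually_gt_atTop 0] with A hA
    rw [Si_eq hA]
    have : ∀ s : ℝ, (1 - Real.exp (-(s*A)) * (Real.cos A + s * Real.sin A)) / (1+s^2)
        = (1+s^2)⁻¹ - Real.exp (-(s*A)) * (Real.cos A + s * Real.sin A) / (1+s^2) := by
      intro s
      rw [sub_div, one_div]
    simp only [this]
    rw [integral_sub (integrable_inv_one_add_sq.integrableOn) (err_integrable hA)]
    rw [integral_Ioi_inv_one_add_sq, Real.arctan_zero, sub_zero]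
  have := Tendsto.sub (tendsto_const_nhds (x := Real.pi/2) (f := atTop)) herr
  rw [sub_zero] at this
  exact Tendsto.congr' hsplit this
lemma Si_bounded : ∃ C : ℝ, 0 ≤ C ∧ ∀ x : ℝ, |Si x| ≤ C := by
  have h1 : ∀ᶠ x in atTop, |Si x - Real.pi/2| < 1 := by
    have := Metric.tendsto_atTop.mp Si_tendsto 1 one_pos
    obtain ⟨N, hN⟩ := this
    filter_upwards [eventually_ge_atTop N] with x hx
    simpa [Real.dist_eq] using hN x hx
  obtain ⟨M, hM⟩ := eventually_atTop.mp h1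
  refine ⟨max (max M 0) (|Real.pi/2| + 1), le_max_of_le_right (by positivity), ?_⟩
  intro x
  rcases le_or_gt M x with hx | hx
  · have := hM x hx
    have : |Si x| ≤ |Real.pi/2| + 1 := by
      have h2 := abs_sub_abs_le_abs_sub (Si x) (Real.pi/2)
      linarith [abs_nonneg (Si x - Real.pi/2)]
    exact this.trans (le_max_right _ _)
  · rcases le_or_gt x 0 with hx0 | hx0
    · rw [Si_nonpos hx0, abs_zero]; positivity
    · calc |Si x| ≤ x := abs_Si_le hx0.le
      _ ≤ max M 0 := le_max_of_le_left hx.le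
      _ ≤ _ := le_max_left _ _

lemma scale {a ε T : ℝ} (ha : 0 < a) (hε : 0 < ε) (hεT : ε ≤ T) :
    ∫ t in Set.Ioc ε T, Real.sin (a*t)/t = Si (a*T) - Si (a*ε) := by
  have haεT : a * ε ≤ a * T := mul_le_mul_of_nonneg_left hεT ha.le
  rw [← Si_diff (by positivity) haεT]
  rw [← intervalIntegral.integral_of_le hεT, ← intervalIntegral.integral_of_le haεT]
  have hcong : ∀ t ∈ Set.uIcc ε T, Real.sin (a*t)/t = a * ((fun u => Real.sin u / u) (a*t)) := by
    intro t ht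
    have htpos : 0 < t := lt_of_lt_of_le hε (Set.uIcc_of_le hεT ▸ ht).1
    field_simp
  rw [intervalIntegral.integral_congr hcong, intervalIntegral.integral_const_mul,
    intervalIntegral.integral_comp_mul_left (fun u => Real.sin u / u) (ne_of_gt ha)]
  rw [smul_eq_mul, ← mul_assoc, mul_inv_cancel₀ (ne_of_gt ha), one_mul]

lemma int_sin_neg (a : ℝ) (s : Set ℝ) :
    ∫ t in s, Real.sin (a*t)/t = -∫ t in s, Real.sin ((-a)*t)/t := by
  rw [← integral_neg]
  congr 1
  funext t
  rw [neg_mul, Real.sin_neg, neg_div, neg_neg]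

lemma int_sin_bound : ∃ C : ℝ, 0 ≤ C ∧ ∀ (a : ℝ) (p : ℝ × ℝ), 0 < p.1 →
    |∫ t in Set.Ioc p.1 p.2, Real.sin (a*t)/t| ≤ C := by
  obtain ⟨C0, hC0, hb⟩ := Si_bounded
  refine ⟨2*C0, by linarith, ?_⟩
  have key : ∀ (a : ℝ), 0 < a → ∀ (p : ℝ × ℝ), 0 < p.1 →
      |∫ t in Set.Ioc p.1 p.2, Real.sin (a*t)/t| ≤ 2*C0 := by
    intro a ha p hp
    rcases le_or_gt p.1 p.2 with hle | hlt
    · rw [scale ha hp hle]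
      calc |Si (a*p.2) - Si (a*p.1)| ≤ |Si (a*p.2)| + |Si (a*p.1)| := abs_sub _ _
      _ ≤ 2*C0 := by linarith [hb (a*p.2), hb (a*p.1)]
    · rw [Set.Ioc_eq_empty (not_lt.mpr hlt.le)]
      simp only [Measure.restrict_empty, integral_zero_measure, abs_zero]
      linarith
  intro a p hp
  rcases lt_trichotomy a 0 with h|h|h
  · rw [int_sin_neg, abs_neg]
    exact key (-a) (by linarith) p hp
  · subst h
    simp only [zero_mul, Real.sin_zero, zero_div, integral_zero, abs_zero]
    linarith
  · exact key a h p hp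

lemma tendsto_int_sin_pos {a : ℝ} (ha : 0 < a) :
    Tendsto (fun p : ℝ × ℝ => ∫ t in Set.Ioc p.1 p.2, Real.sin (a*t)/t)
      ((nhdsWithin (0:ℝ) (Set.Ioi 0)) ×ˢ atTop) (𝓝 (Real.pi/2)) := by
  set l := (nhdsWithin (0:ℝ) (Set.Ioi 0)) ×ˢ (atTop : Filter ℝ) with hl
  have hev : ∀ᶠ p : ℝ × ℝ in l, Si (a*p.2) - Si (a*p.1)
      = ∫ t in Set.Ioc p.1 p.2, Real.sin (a*t)/t := by
    have h1 : ∀ᶠ x in nhdsWithin (0:ℝ) (Set.Ioi 0), 0 < x ∧ x < 1 := by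
      filter_upwards [self_mem_nhdsWithin, Ioo_mem_nhdsGT_of_mem (Set.mem_Ico.mpr ⟨le_rfl, one_pos⟩)] with x hx hx2
      exact ⟨hx, hx2.2⟩
    filter_upwards [h1.prod_mk (eventually_ge_atTop (1:ℝ))] with p hp
    exact (scale ha hp.1.1 (hp.1.2.le.trans hp.2)).symm
  have hT : Tendsto (fun p : ℝ × ℝ => Si (a*p.2)) l (𝓝 (Real.pi/2)) := by
    apply Si_tendsto.comp
    exact Tendsto.const_mul_atTop ha tendsto_snd
  have hε : Tendsto (fun p : ℝ × ℝ => Si (a*p.1)) l (𝓝 0) := by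
    have h0 : Tendsto (fun p : ℝ × ℝ => a * p.1) l (𝓝 0) := by
      have : Tendsto (Prod.fst : ℝ × ℝ → ℝ) l (𝓝 0) :=
        tendsto_fst.mono_right nhdsWithin_le_nhds
      simpa using this.const_mul a
    have := (continuous_Si.tendsto 0).comp h0
    rwa [Si_nonpos le_rfl] at this
  have := hT.sub hε
  rw [sub_zero] at this
  exact Tendsto.congr' hev this

lemma tendsto_int_sin (a : ℝ) :
    Tendsto (fun p : ℝ × ℝ => ∫ t in Set.Ioc p.1 p.2, Real.sin (a*t)/t)
      ((nhdsWithin (0:ℝ) (Set.Ioi 0)) ×ˢ atTop) (𝓝 (Real.pi/2 * Real.sign a)) := by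
  rcases lt_trichotomy a 0 with h|h|h
  · rw [Real.sign_of_neg h]
    have := (tendsto_int_sin_pos (a := -a) (by linarith)).neg
    rw [show -(Real.pi/2) = Real.pi/2 * (-1) by ring] at this
    apply Tendsto.congr _ this
    intro p
    rw [int_sin_neg a]
  · subst h
    rw [Real.sign_zero, mul_zero]
    apply Tendsto.congr (f₁ := fun _ => (0:ℝ))
    · intro p
      simp only [zero_mul, Real.sin_zero, zero_div, integral_zero]
    · exact tendsto_const_nhds
  · rw [Real.sign_of_pos h, mul_one]
    exact tendsto_int_sin_pos h
lemma exp_integrable {Ω : Type*} [MeasureSpace Ω] [IsProbabilityMeasure (ℙ : Measure Ω)]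
    {g : Ω → ℝ} (hg : Measurable g) :
    Integrable (fun ω => Complex.exp ((g ω : ℂ) * Complex.I)) ℙ := by
  apply Integrable.mono' (integrable_const (1:ℝ))
  · exact (Complex.measurable_exp.comp ((Complex.measurable_ofReal.comp hg).mul_const _)).aestronglyMeasurable
  · filter_upwards with ω
    rw [Complex.norm_exp]
    simp

lemma phi_im {Ω : Type*} [MeasureSpace Ω] [IsProbabilityMeasure (ℙ : Measure Ω)]
    (Y : Ω → ℝ) (hY : Measurable Y) (y t : ℝ) :
    (Complex.exp (-(Complex.I * t * y)) * ∫ ω, Complex.exp (Complex.I * t * Y ω) ∂ℙ).im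
      = ∫ ω, Real.sin ((Y ω - y) * t) ∂ℙ := by
  have h1 : ∀ ω : Ω, Complex.exp (Complex.I * t * Y ω) = Complex.exp (((Y ω * t : ℝ) : ℂ) * Complex.I) := by
    intro ω; congr 1; push_cast; ring
  have h2 : ∀ ω : Ω,
      Complex.exp (-(Complex.I * t * y)) * Complex.exp (((Y ω * t : ℝ) : ℂ) * Complex.I)
        = Complex.exp ((((Y ω - y) * t : ℝ) : ℂ) * Complex.I) := by
    intro ω
    rw [← Complex.exp_add]
    congr 1
    push_cast
    ring
  calc (Complex.exp (-(Complex.I * t * y)) * ∫ ω, Complex.exp (Complex.I * t * Y ω) ∂ℙ).im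
      = (∫ ω, Complex.exp ((((Y ω - y) * t : ℝ) : ℂ) * Complex.I) ∂ℙ).im := by
        simp only [h1]
        rw [← integral_const_mul]
        congr 1
        exact integral_congr_ae (Filter.Eventually.of_forall h2)
    _ = ∫ ω, Real.sin ((Y ω - y) * t) ∂ℙ := by
        have := (Complex.imCLM.integral_comp_comm
          (exp_integrable (g := fun ω => (Y ω - y) * t) ((hY.sub measurable_const).mul_const t))).symm
        simp only [Complex.imCLM_apply, Complex.exp_ofReal_mul_I_im] at this
        rw [← this]
lemma fubini_step {Ω : Type*} [MeasureSpace Ω] [IsProbabilityMeasure (ℙ : Measure Ω)]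
    (Y : Ω → ℝ) (hY : Measurable Y) (y : ℝ) {ε T : ℝ} (hε : 0 < ε) :
    ∫ t in Set.Ioc ε T, (∫ ω, Real.sin ((Y ω - y) * t) ∂ℙ) / t
      = ∫ ω, (∫ t in Set.Ioc ε T, Real.sin ((Y ω - y) * t) / t) ∂ℙ := by
  haveI : IsFiniteMeasure (volume.restrict (Set.Ioc ε T)) :=
    ⟨by rw [Measure.restrict_apply_univ]; exact measure_Ioc_lt_top⟩
  have hunc : (Function.uncurry fun t ω => Real.sin ((Y ω - y) * t) / t)
      = fun q : ℝ × Ω => Real.sin ((Y q.2 - y) * q.1) / q.1 := rfl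
  have hmble : Measurable fun q : ℝ × Ω => Real.sin ((Y q.2 - y) * q.1) / q.1 :=
    (Real.measurable_sin.comp (((hY.comp measurable_snd).sub measurable_const).mul
      measurable_fst)).div measurable_fst
  have hint : Integrable (Function.uncurry fun t ω => Real.sin ((Y ω - y) * t) / t)
      ((volume.restrict (Set.Ioc ε T)).prod ℙ) := by
    rw [hunc]
    apply Integrable.mono' (integrable_const (1/ε))
    · exact hmble.aestronglyMeasurable
    · have hprod : (volume.restrict (Set.Ioc ε T)).prod (ℙ : Measure Ω)
          = ((volume.prod ℙ)).restrict ((Set.Ioc ε T) ×ˢ Set.univ) := by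
        rw [← Measure.prod_restrict, Measure.restrict_univ]
      rw [hprod]
      filter_upwards [ae_restrict_mem (measurableSet_Ioc.prod MeasurableSet.univ)] with q hq
      have hq1 : q.1 ∈ Set.Ioc ε T := hq.1
      rw [Real.norm_eq_abs, abs_div, abs_of_pos (hε.trans hq1.1)]
      exact div_le_div₀ zero_le_one (Real.abs_sin_le_one _) hε hq1.1.le
  calc ∫ t in Set.Ioc ε T, (∫ ω, Real.sin ((Y ω - y) * t) ∂ℙ) / t
      = ∫ t in Set.Ioc ε T, ∫ ω, Real.sin ((Y ω - y) * t) / t ∂ℙ := by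
        simp only [← MeasureTheory.integral_div]
    _ = ∫ ω, (∫ t in Set.Ioc ε T, Real.sin ((Y ω - y) * t) / t) ∂ℙ :=
        MeasureTheory.integral_integral_swap hint
/-- Gil-Pelaez inversion: for a real random variable `Y` whose law has no atoms, with CDF `F`
and characteristic function `φ`, for every `y`,
`F(y) = 1/2 - (1/π) lim_{ε→0⁺, T→∞} ∫_ε^T Im(e^{-ity} φ(t))/t dt`. -/
theorem gil_pelaez_inversion
    {Ω : Type*} [MeasureSpace Ω] [IsProbabilityMeasure (ℙ : Measure Ω)]
    (Y : Ω → ℝ) (hY : Measurable Y)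
    (hNoAtoms : ∀ y : ℝ, Measure.map Y ℙ {y} = 0)
    (F : ℝ → ℝ) (hF : ∀ y, F y = (ℙ {ω | Y ω ≤ y}).toReal)
    (φ : ℝ → ℂ) (hφ : ∀ t : ℝ, φ t = ∫ ω, Complex.exp (Complex.I * t * Y ω) ∂ℙ) :
    ∀ y : ℝ, ∃ L : ℝ,
      Tendsto
        (fun p : ℝ × ℝ =>
          ∫ t in Set.Ioc p.1 p.2, (Complex.exp (-(Complex.I * t * y)) * φ t).im / t)
        ((nhdsWithin (0 : ℝ) (Set.Ioi 0)) ×ˢ atTop) (nhds L) ∧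
      F y = 1 / 2 - (1 / Real.pi) * L := by
  intro y
  obtain ⟨C, hC0, hC⟩ := int_sin_bound
  refine ⟨∫ ω, Real.pi/2 * Real.sign (Y ω - y) ∂ℙ, ?_, ?_⟩
  · -- the convergence
    have hev1 : ∀ᶠ p : ℝ × ℝ in (nhdsWithin (0 : ℝ) (Set.Ioi 0)) ×ˢ atTop, 0 < p.1 := by
      have h1 : ∀ᶠ x in nhdsWithin (0:ℝ) (Set.Ioi 0), 0 < x := eventually_mem_nhdsWithin
      exact (h1.prod_mk (eventually_ge_atTop (0:ℝ))).mono fun p hp => hp.1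
    have hDCT := MeasureTheory.tendsto_integral_filter_of_dominated_convergence
      (μ := (ℙ : Measure Ω))
      (l := (nhdsWithin (0 : ℝ) (Set.Ioi 0)) ×ˢ atTop)
      (F := fun p (ω : Ω) => ∫ t in Set.Ioc p.1 p.2, Real.sin ((Y ω - y) * t) / t)
      (f := fun ω => Real.pi/2 * Real.sign (Y ω - y))
      (bound := fun _ => C)
      ?_ ?_ (integrable_const C) ?_
    · apply hDCT.congr'
      filter_upwards [hev1] with p hp
      have step1 : (fun t : ℝ => (Complex.exp (-(Complex.I * t * y)) * φ t).im / t)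
          = fun t : ℝ => (∫ ω, Real.sin ((Y ω - y) * t) ∂ℙ) / t := by
        funext t
        rw [hφ t, phi_im Y hY y t]
      rw [show (∫ ω, (∫ t in Set.Ioc p.1 p.2, Real.sin ((Y ω - y) * t) / t) ∂ℙ)
          = ∫ t in Set.Ioc p.1 p.2, (∫ ω, Real.sin ((Y ω - y) * t) ∂ℙ) / t from
        (fubini_step Y hY y hp).symm]
      simp only [step1]
    · -- measurability
      filter_upwards [hev1] with p hp
      rcases le_or_gt p.1 p.2 with hle | hlt
      · have hrep : ∀ a : ℝ, (∫ t in Set.Ioc p.1 p.2, Real.sin (a * t) / t)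
            = if 0 < a then Si (a * p.2) - Si (a * p.1)
              else if a < 0 then -(Si (-a * p.2) - Si (-a * p.1)) else 0 := by
          intro a
          rcases lt_trichotomy a 0 with h|h|h
          · rw [if_neg (not_lt.mpr h.le), if_pos h, int_sin_neg a,
              scale (by linarith : (0:ℝ) < -a) hp hle]
          · subst h
            rw [if_neg (lt_irrefl 0), if_neg (lt_irrefl 0)]
            simp only [zero_mul, Real.sin_zero, zero_div, integral_zero]
          · rw [if_pos h, scale h hp hle]
        have hG : Measurable (fun a : ℝ => if 0 < a then Si (a * p.2) - Si (a * p.1)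
            else if a < 0 then -(Si (-a * p.2) - Si (-a * p.1)) else 0) := by
          apply Measurable.ite (measurableSet_lt measurable_const measurable_id)
          · exact (continuous_Si.measurable.comp (measurable_id.mul_const _)).sub
              (continuous_Si.measurable.comp (measurable_id.mul_const _))
          · apply Measurable.ite (measurableSet_lt measurable_id measurable_const)
            · exact ((continuous_Si.measurable.comp (measurable_id.neg.mul_const _)).sub
                (continuous_Si.measurable.comp (measurable_id.neg.mul_const _))).neg
            · exact measurable_const
        have hfun : (fun ω : Ω => ∫ t in Set.Ioc p.1 p.2, Real.sin ((Y ω - y) * t) / t)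
            = fun ω : Ω => (fun a : ℝ => if 0 < a then Si (a * p.2) - Si (a * p.1)
              else if a < 0 then -(Si (-a * p.2) - Si (-a * p.1)) else 0) (Y ω - y) :=
          funext fun ω => hrep (Y ω - y)
        rw [hfun]
        exact (hG.comp (hY.sub measurable_const)).aestronglyMeasurable
      · have : (fun ω : Ω => ∫ t in Set.Ioc p.1 p.2, Real.sin ((Y ω - y) * t) / t)
            = fun _ : Ω => (0:ℝ) := by
          funext ω
          rw [Set.Ioc_eq_empty (not_lt.mpr hlt.le)]
          simp
        rw [this]
        exact aestronglyMeasurable_const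
    · -- bound
      filter_upwards [hev1] with p hp
      filter_upwards with ω
      rw [Real.norm_eq_abs]
      exact hC (Y ω - y) p hp
    · -- pointwise limit
      filter_upwards with ω
      exact tendsto_int_sin (Y ω - y)
  · -- the value
    have hm : MeasurableSet {ω | Y ω ≤ y} := hY measurableSet_Iic
    have hmlt : MeasurableSet {ω : Ω | Y ω < y} := hY measurableSet_Iio
    have hmgt : MeasurableSet {ω : Ω | y < Y ω} := hY measurableSet_Ioi
    have hz : ℙ {ω : Ω | Y ω = y} = 0 := by
      have h := hNoAtoms y
      rw [Measure.map_apply hY (measurableSet_singleton y)] at h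
      have hpre : Y ⁻¹' {y} = {ω : Ω | Y ω = y} := by ext ω; simp
      rwa [hpre] at h
    have hlt_eq : ℙ {ω : Ω | Y ω < y} = ℙ {ω : Ω | Y ω ≤ y} := by
      have hsub : {ω : Ω | Y ω < y} ⊆ {ω : Ω | Y ω ≤ y} := fun ω h => le_of_lt (Set.mem_setOf.mp h)
      have hsub2 : {ω : Ω | Y ω ≤ y} ⊆ {ω : Ω | Y ω < y} ∪ {ω : Ω | Y ω = y} := fun ω h =>
        lt_or_eq_of_le (Set.mem_setOf.mp h)
      apply le_antisymm (measure_mono hsub)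
      calc ℙ {ω : Ω | Y ω ≤ y} ≤ ℙ ({ω : Ω | Y ω < y} ∪ {ω : Ω | Y ω = y}) :=
            measure_mono hsub2
      _ ≤ ℙ {ω : Ω | Y ω < y} + ℙ {ω : Ω | Y ω = y} := measure_union_le _ _
      _ = ℙ {ω : Ω | Y ω < y} := by rw [hz, add_zero]
    have hgt_eq : ℙ {ω : Ω | y < Y ω} = 1 - ℙ {ω : Ω | Y ω ≤ y} := by
      have hc : {ω : Ω | y < Y ω} = {ω : Ω | Y ω ≤ y}ᶜ := by ext ω; simp [not_le]
      rw [hc, measure_compl hm (measure_ne_top _ _), measure_univ]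
    have hsign : (fun ω : Ω => Real.pi/2 * Real.sign (Y ω - y))
        = fun ω : Ω => Real.pi/2 * (Set.indicator {ω : Ω | y < Y ω} (fun _ => (1:ℝ)) ω
            - Set.indicator {ω : Ω | Y ω < y} (fun _ => (1:ℝ)) ω) := by
      funext ω
      rcases lt_trichotomy (Y ω) y with h|h|h
      · rw [Real.sign_of_neg (by linarith : Y ω - y < 0),
          Set.indicator_of_notMem (by simpa using (by linarith : ¬ y < Y ω)),
          Set.indicator_of_mem (by simpa using h)]
        norm_num
      · rw [show Y ω - y = 0 by linarith, Real.sign_zero,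
          Set.indicator_of_notMem (by simpa using (by linarith : ¬ y < Y ω)),
          Set.indicator_of_notMem (by simpa using (by linarith : ¬ Y ω < y))]
        norm_num
      · rw [Real.sign_of_pos (by linarith : 0 < Y ω - y),
          Set.indicator_of_mem (by simpa using h),
          Set.indicator_of_notMem (by simpa using (by linarith : ¬ Y ω < y))]
        norm_num
    rw [hsign, MeasureTheory.integral_const_mul,
      integral_sub ((integrable_const (1:ℝ)).indicator hmgt)
        ((integrable_const (1:ℝ)).indicator hmlt),
      integral_indicator_const (1:ℝ) hmgt, integral_indicator_const (1:ℝ) hmlt,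
      smul_eq_mul, smul_eq_mul, mul_one, mul_one, measureReal_def, measureReal_def, hgt_eq, hlt_eq,
      ENNReal.toReal_sub_of_le prob_le_one ENNReal.one_ne_top, ENNReal.toReal_one, hF y]
    have hpi := Real.pi_ne_zero
    set r := (ℙ {ω : Ω | Y ω ≤ y}).toReal
    field_simp
    ring
end
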